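/- For α ∈ (0,1), ρ ∈ (0,1], fixed times 0 = t₀ < t₁ < ⋯ < t_n, and A(η₁,…,η₂) as above with n = 2, the function Φ(η₁,η₂) = Γ(ρ, A(η₁,η₂))/Γ(ρ) is completely monotone in (η₁,η₂), i.e. (−1)^{k₁+k₂} ∂^{k₁+k₂}Φ/∂η₁^{k₁}∂η₂^{k₂} ≥ 0 for all k₁,k₂ ≥ 0. -/

import Mathlib

open MeasureTheory Real Set Filter Topology
open scoped ContDiff

noncomputable section CMAux

/-- smooth on the positive half line -/
def Sm (f : ℝ → ℝ) : Prop := ContDiffOn ℝ ∞ f (Set.Ioi 0)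

lemma Sm.contDiffAt {f : ℝ → ℝ} (hf : Sm f) {x : ℝ} (hx : 0 < x) :
    ContDiffAt ℝ ∞ f x :=
  ContDiffOn.contDiffAt hf (isOpen_Ioi.mem_nhds hx)

lemma Sm.differentiableAt {f : ℝ → ℝ} (hf : Sm f) {x : ℝ} (hx : 0 < x) :
    DifferentiableAt ℝ f x :=
  (Sm.contDiffAt hf hx).differentiableAt (by simp)

lemma Sm.deriv {f : ℝ → ℝ} (hf : Sm f) : Sm (deriv f) :=
  ContDiffOn.deriv_of_isOpen hf isOpen_Ioi (by exact_mod_cast le_top)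

lemma Sm.iteratedDeriv {f : ℝ → ℝ} (hf : Sm f) (n : ℕ) : Sm (iteratedDeriv n f) := by
  induction n with
  | zero => simpa [iteratedDeriv_zero] using hf
  | succ n ih => rw [iteratedDeriv_succ]; exact ih.deriv

lemma Sm.add {f g : ℝ → ℝ} (hf : Sm f) (hg : Sm g) : Sm (fun x => f x + g x) :=
  ContDiffOn.add hf hg

lemma Sm.mul {f g : ℝ → ℝ} (hf : Sm f) (hg : Sm g) : Sm (fun x => f x * g x) :=
  ContDiffOn.mul hf hg

lemma Sm.const (c : ℝ) : Sm (fun _ => c) := contDiffOn_const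

lemma Sm.zero : Sm (fun _ => (0:ℝ)) := contDiffOn_const

lemma Sm.const_mul {f : ℝ → ℝ} (c : ℝ) (hf : Sm f) : Sm (fun x => c * f x) :=
  (Sm.const c).mul hf


lemma iteratedDeriv_add_pos {f g : ℝ → ℝ} (hf : Sm f) (hg : Sm g) (n : ℕ) :
    ∀ x, 0 < x → iteratedDeriv n (fun y => f y + g y) x
      = iteratedDeriv n f x + iteratedDeriv n g x := by
  induction n with
  | zero => simp
  | succ n ih =>
    intro x hx
    rw [iteratedDeriv_succ, iteratedDeriv_succ, iteratedDeriv_succ]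
    have h1 : iteratedDeriv n (fun y => f y + g y) =ᶠ[𝓝 x]
        fun y => iteratedDeriv n f y + iteratedDeriv n g y := by
      filter_upwards [isOpen_Ioi.mem_nhds hx] with y hy using ih y hy
    rw [h1.deriv_eq]
    exact deriv_add ((hf.iteratedDeriv n).differentiableAt hx)
      ((hg.iteratedDeriv n).differentiableAt hx)

lemma Sm.sum {ι : Type*} (s : Finset ι) (f : ι → ℝ → ℝ) (h : ∀ i ∈ s, Sm (f i)) :
    Sm (fun y => ∑ i ∈ s, f i y) := by
  classical
  induction s using Finset.induction with
  | empty => simpa using Sm.zero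
  | @insert a s' hi ih =>
    simp only [Finset.sum_insert hi]
    exact ContDiffOn.add (h a (by simp)) (ih fun i hi' => h i (by simp [hi']))

lemma iteratedDeriv_sum_pos {ι : Type*} (s : Finset ι) (f : ι → ℝ → ℝ)
    (h : ∀ i ∈ s, Sm (f i)) (n : ℕ) {x : ℝ} (hx : 0 < x) :
    iteratedDeriv n (fun y => ∑ i ∈ s, f i y) x
      = ∑ i ∈ s, iteratedDeriv n (f i) x := by
  classical
  induction s using Finset.induction with
  | empty =>
    simp only [Finset.sum_empty]
    have hz : iteratedDeriv n (fun _ : ℝ => (0:ℝ)) = fun _ => 0 := by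
      induction n with
      | zero => simp
      | succ n ih => rw [iteratedDeriv_succ, ih]; funext y; simp
    simp [hz]
  | @insert a s' hi ih =>
    simp only [Finset.sum_insert hi]
    rw [iteratedDeriv_add_pos (h a (by simp))
      (Sm.sum s' f fun i hi' => h i (by simp [hi'])) n x hx,
      ih fun i hi' => h i (by simp [hi'])]

lemma iteratedDeriv_mul_pos {f g : ℝ → ℝ} (hf : Sm f) (hg : Sm g) (n : ℕ) :
    ∀ x, 0 < x → iteratedDeriv n (fun y => f y * g y) x
      = ∑ k ∈ Finset.range (n+1),
          (n.choose k : ℝ) * (iteratedDeriv k f x * iteratedDeriv (n-k) g x) := by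
  induction n with
  | zero => intro x hx; simp
  | succ n ih =>
    intro x hx
    rw [iteratedDeriv_succ]
    have h1 : iteratedDeriv n (fun y => f y * g y) =ᶠ[𝓝 x]
        fun y => ∑ k ∈ Finset.range (n+1),
          (n.choose k : ℝ) * (iteratedDeriv k f y * iteratedDeriv (n-k) g y) := by
      filter_upwards [isOpen_Ioi.mem_nhds hx] with y hy using ih y hy
    rw [h1.deriv_eq]
    have hd : ∀ k ∈ Finset.range (n+1), HasDerivAt
        (fun y => (n.choose k : ℝ) * (iteratedDeriv k f y * iteratedDeriv (n-k) g y))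
        ((n.choose k : ℝ) * (iteratedDeriv (k+1) f x * iteratedDeriv (n-k) g x
          + iteratedDeriv k f x * iteratedDeriv (n-k+1) g x)) x := by
      intro k _
      have hfk : HasDerivAt (iteratedDeriv k f) (iteratedDeriv (k+1) f x) x := by
        rw [iteratedDeriv_succ]
        exact ((hf.iteratedDeriv k).differentiableAt hx).hasDerivAt
      have hgk : HasDerivAt (iteratedDeriv (n-k) g) (iteratedDeriv (n-k+1) g x) x := by
        rw [iteratedDeriv_succ]
        exact ((hg.iteratedDeriv (n-k)).differentiableAt hx).hasDerivAt
      exact (hfk.mul hgk).const_mul _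
    have := (HasDerivAt.fun_sum hd).deriv
    rw [this]
    -- now pure algebra
    have hrw : ∀ k ∈ Finset.range (n+1),
        (n.choose k : ℝ) * (iteratedDeriv (k+1) f x * iteratedDeriv (n-k) g x
          + iteratedDeriv k f x * iteratedDeriv (n-k+1) g x)
        = (n.choose k : ℝ) * (iteratedDeriv (k+1) f x * iteratedDeriv (n-k) g x)
          + (n.choose k : ℝ) * (iteratedDeriv k f x * iteratedDeriv (n+1-k) g x) := by
      intro k hk
      have : n - k + 1 = n + 1 - k := by
        have := Finset.mem_range.mp hk; omega
      rw [this]; ring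
    rw [Finset.sum_congr rfl hrw, Finset.sum_add_distrib]
    have e1 : ∑ k ∈ Finset.range (n+1+1), ((n+1).choose k : ℝ) *
          (iteratedDeriv k f x * iteratedDeriv (n+1-k) g x)
        = (∑ k ∈ Finset.range (n+1), ((n+1).choose (k+1) : ℝ) *
            (iteratedDeriv (k+1) f x * iteratedDeriv (n-k) g x))
          + iteratedDeriv 0 f x * iteratedDeriv (n+1) g x := by
      rw [Finset.sum_range_succ']
      simp only [Nat.choose_zero_right, Nat.cast_one, one_mul, Nat.sub_zero]
      congr 1
      refine Finset.sum_congr rfl fun k hk => ?_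
      have : n + 1 - (k+1) = n - k := by omega
      rw [this]
    have e2 : ∑ k ∈ Finset.range (n+1), (n.choose k : ℝ) *
          (iteratedDeriv k f x * iteratedDeriv (n+1-k) g x)
        = (∑ k ∈ Finset.range (n+1), (n.choose (k+1) : ℝ) *
            (iteratedDeriv (k+1) f x * iteratedDeriv (n-k) g x))
          + iteratedDeriv 0 f x * iteratedDeriv (n+1) g x := by
      rw [Finset.sum_range_succ']
      simp only [Nat.choose_zero_right, Nat.cast_one, one_mul, Nat.sub_zero]
      rw [Finset.sum_range_succ]
      simp only [Nat.choose_succ_self, Nat.cast_zero, zero_mul, add_zero]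
      congr 1
      refine Finset.sum_congr rfl fun k hk => ?_
      have : n + 1 - (k+1) = n - k := by omega
      rw [this]
    rw [e1, e2, ← add_assoc, ← Finset.sum_add_distrib]
    congr 1
    refine Finset.sum_congr rfl fun k hk => ?_
    have : ((n+1).choose (k+1) : ℝ) = (n.choose k : ℝ) + (n.choose (k+1) : ℝ) := by
      rw [Nat.choose_succ_succ]; push_cast; ring
    rw [this]; ring

lemma Sm.of_contDiffAt {f : ℝ → ℝ} (h : ∀ x : ℝ, 0 < x → ContDiffAt ℝ ∞ f x) : Sm f :=
  fun x hx => (h x hx).contDiffWithinAt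

lemma Sm.comp {g f : ℝ → ℝ} (hg : Sm g) (hf : Sm f) (hpos : ∀ x, 0 < x → 0 < f x) :
    Sm (fun y => g (f y)) :=
  Sm.of_contDiffAt fun x hx => (hg.contDiffAt (hpos x hx)).comp x (hf.contDiffAt hx)

lemma sgn_mul {a b : ℕ} {u v : ℝ} (hu : 0 ≤ (-1:ℝ)^a * u) (hv : 0 ≤ (-1:ℝ)^b * v) :
    0 ≤ (-1:ℝ)^(a+b) * (u*v) := by
  have h := mul_nonneg hu hv
  have e : (-1:ℝ)^a * u * ((-1:ℝ)^b * v) = (-1:ℝ)^(a+b) * (u*v) := by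
    rw [pow_add]; ring
  linarith [e ▸ h]

lemma neg_one_pow_parity {a b : ℕ} (h : a % 2 = b % 2) : ((-1:ℝ))^a = (-1)^b := by
  conv_lhs => rw [← Nat.div_add_mod a 2]
  conv_rhs => rw [← Nat.div_add_mod b 2]
  rw [pow_add, pow_add, pow_mul, pow_mul, h]; norm_num

/-- signed complete monotonicity on `(0,∞)`: `(-1)^(n+σ) f⁽ⁿ⁾ ≥ 0`. -/
def SCM (σ : ℕ) (f : ℝ → ℝ) : Prop :=
  Sm f ∧ ∀ n : ℕ, ∀ x : ℝ, 0 < x → 0 ≤ (-1:ℝ)^(n+σ) * iteratedDeriv n f x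

lemma SCM.parity {σ σ' : ℕ} {f : ℝ → ℝ} (h : SCM σ f) (hp : σ' % 2 = σ % 2) : SCM σ' f := by
  refine ⟨h.1, fun n x hx => ?_⟩
  rw [neg_one_pow_parity (a := n + σ') (b := n + σ) (by omega)]
  exact h.2 n x hx

lemma SCM.zero_fun (σ : ℕ) : SCM σ (fun _ => (0:ℝ)) := by
  refine ⟨contDiffOn_const, fun n x hx => ?_⟩
  have hz : iteratedDeriv n (fun _ : ℝ => (0:ℝ)) = fun _ => 0 := by
    induction n with
    | zero => simp
    | succ n ih => rw [iteratedDeriv_succ, ih]; funext y; simp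
  simp [hz]

lemma SCM.add {σ : ℕ} {f g : ℝ → ℝ} (hf : SCM σ f) (hg : SCM σ g) :
    SCM σ (fun x => f x + g x) := by
  refine ⟨ContDiffOn.add hf.1 hg.1, fun n x hx => ?_⟩
  rw [iteratedDeriv_add_pos hf.1 hg.1 n x hx, mul_add]
  exact add_nonneg (hf.2 n x hx) (hg.2 n x hx)

lemma SCM.mul {σ₁ σ₂ : ℕ} {f g : ℝ → ℝ} (hf : SCM σ₁ f) (hg : SCM σ₂ g) :
    SCM (σ₁+σ₂) (fun x => f x * g x) := by
  refine ⟨ContDiffOn.mul hf.1 hg.1, fun n x hx => ?_⟩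
  rw [iteratedDeriv_mul_pos hf.1 hg.1 n x hx, Finset.mul_sum]
  refine Finset.sum_nonneg fun k hk => ?_
  have hk' : k ≤ n := by have := Finset.mem_range.mp hk; omega
  have h1 := hf.2 k x hx
  have h2 := hg.2 (n-k) x hx
  have h3 := sgn_mul h1 h2
  have he : (k+σ₁) + ((n-k)+σ₂) = n + (σ₁+σ₂) := by omega
  rw [he] at h3
  have : (-1:ℝ)^(n+(σ₁+σ₂)) * ((n.choose k : ℝ) * (iteratedDeriv k f x * iteratedDeriv (n-k) g x))
      = (n.choose k : ℝ) * ((-1:ℝ)^(n+(σ₁+σ₂)) * (iteratedDeriv k f x * iteratedDeriv (n-k) g x)) := by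
    ring
  rw [this]
  exact mul_nonneg (by positivity) h3

lemma SCM.deriv {σ : ℕ} {f : ℝ → ℝ} (hf : SCM σ f) : SCM (σ+1) (_root_.deriv f) := by
  refine ⟨hf.1.deriv, fun n x hx => ?_⟩
  rw [← iteratedDeriv_succ']
  have he : n + (σ+1) = (n+1) + σ := by omega
  rw [he]
  exact hf.2 (n+1) x hx

lemma SCM.const {c : ℝ} (hc : 0 ≤ c) : SCM 0 (fun _ => c) := by
  refine ⟨contDiffOn_const, fun n x hx => ?_⟩
  have hz : iteratedDeriv n (fun _ : ℝ => c) = fun _ => if n = 0 then c else 0 := by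
    induction n with
    | zero => simp
    | succ n ih =>
      rw [iteratedDeriv_succ, ih]; funext y
      rcases n with _ | n <;> simp
  rcases n with _ | n <;> simp [hz, hc]

lemma SCM.const_mul {σ : ℕ} {c : ℝ} {f : ℝ → ℝ} (hc : 0 ≤ c) (hf : SCM σ f) :
    SCM σ (fun x => c * f x) := by
  have := (SCM.const hc).mul hf
  simpa using this

lemma SCM.shift {σ : ℕ} {f : ℝ → ℝ} (hf : SCM σ f) {c : ℝ} (hc : 0 ≤ c) :
    SCM σ (fun y => f (c + y)) := by
  constructor
  · refine Sm.of_contDiffAt fun x hx => ?_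
    exact (hf.1.contDiffAt (by positivity)).comp x
      ((contDiffAt_const (c := c)).add contDiffAt_id)
  · intro n x hx
    rw [iteratedDeriv_comp_const_add]
    exact hf.2 n (c + x) (by positivity)

/-- composition of a signed completely monotone function with a "Bernstein" function. -/
lemma SCM.compBernstein {f : ℝ → ℝ} (hfS : Sm f) (hpos : ∀ x, 0 < x → 0 < f x)
    (hfd : ∀ n x, 0 < x → 0 ≤ (-1:ℝ)^n * iteratedDeriv n (_root_.deriv f) x) :
    ∀ (l : ℕ) (σ : ℕ) (g : ℝ → ℝ), SCM σ g →
      ∀ y, 0 < y → 0 ≤ (-1:ℝ)^(l+σ) * iteratedDeriv l (fun y => g (f y)) y := by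
  intro l
  induction l using Nat.strong_induction_on with
  | _ l IH =>
    rcases l with _ | l
    · intro σ g hg y hy
      simpa using hg.2 0 (f y) (hpos y hy)
    · intro σ g hg y hy
      have hgf : Sm (fun y => g (f y)) := Sm.comp hg.1 hfS hpos
      have hg'f : Sm (fun y => _root_.deriv g (f y)) := Sm.comp hg.1.deriv hfS hpos
      have hchain : Set.EqOn (_root_.deriv (fun y => g (f y)))
          (fun y => _root_.deriv g (f y) * _root_.deriv f y) (Set.Ioi 0) := by
        intro z hz
        have h1 : HasDerivAt g (_root_.deriv g (f z)) (f z) :=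
          (hg.1.differentiableAt (hpos z hz)).hasDerivAt
        have h2 : HasDerivAt f (_root_.deriv f z) z := (hfS.differentiableAt hz).hasDerivAt
        exact (h1.comp z h2).deriv
      rw [iteratedDeriv_succ']
      rw [Set.EqOn.iteratedDeriv_of_isOpen hchain isOpen_Ioi l hy]
      rw [iteratedDeriv_mul_pos hg'f hfS.deriv l y hy, Finset.mul_sum]
      refine Finset.sum_nonneg fun k hk => ?_
      have hk' : k ≤ l := by have := Finset.mem_range.mp hk; omega
      have h1 : 0 ≤ (-1:ℝ)^(k+(σ+1)) * iteratedDeriv k (fun y => _root_.deriv g (f y)) y :=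
        IH k (by omega) (σ+1) (_root_.deriv g) (SCM.deriv hg) y hy
      have h2 := hfd (l-k) y hy
      have h3 := sgn_mul h1 h2
      have he : (k+(σ+1)) + (l-k) = (l+1) + σ := by omega
      rw [he] at h3
      have : (-1:ℝ)^((l+1)+σ) * ((l.choose k : ℝ) *
            (iteratedDeriv k (fun y => _root_.deriv g (f y)) y * iteratedDeriv (l-k) (_root_.deriv f) y))
          = (l.choose k : ℝ) * ((-1:ℝ)^((l+1)+σ) *
            (iteratedDeriv k (fun y => _root_.deriv g (f y)) y * iteratedDeriv (l-k) (_root_.deriv f) y)) := by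
        ring
      rw [this]
      exact mul_nonneg (by positivity) h3

lemma itd_rpow (β : ℝ) (n : ℕ) : ∀ x : ℝ, 0 < x →
    iteratedDeriv n (fun u : ℝ => u ^ β) x
      = (∏ j ∈ Finset.range n, (β - j)) * x ^ (β - n) := by
  induction n with
  | zero => intro x hx; simp
  | succ n ih =>
    intro x hx
    rw [iteratedDeriv_succ]
    have h1 : iteratedDeriv n (fun u : ℝ => u ^ β) =ᶠ[𝓝 x]
        fun u => (∏ j ∈ Finset.range n, (β - j)) * u ^ (β - n) := by
      filter_upwards [isOpen_Ioi.mem_nhds hx] with y hy using ih y hy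
    rw [h1.deriv_eq]
    have hd : HasDerivAt (fun u : ℝ => (∏ j ∈ Finset.range n, (β - j)) * u ^ (β - n))
        ((∏ j ∈ Finset.range n, (β - j)) * ((β - n) * x ^ (β - n - 1))) x :=
      (Real.hasDerivAt_rpow_const (Or.inl hx.ne')).const_mul _
    rw [hd.deriv, Finset.prod_range_succ]
    have he : β - ((n:ℝ)+1) = β - n - 1 := by ring
    push_cast
    rw [he]; ring

lemma SCM.rpow {β : ℝ} (hβ : β ≤ 0) : SCM 0 (fun u : ℝ => u ^ β) := by
  constructor
  · exact Sm.of_contDiffAt fun x hx => Real.contDiffAt_rpow_const_of_ne hx.ne'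
  · intro n x hx
    rw [itd_rpow β n x hx]
    have : (-1:ℝ)^(n+0) * ((∏ j ∈ Finset.range n, (β - j)) * x ^ (β - n))
        = (∏ j ∈ Finset.range n, ((j:ℝ) - β)) * x ^ (β - n) := by
      rw [add_zero]
      have : (∏ j ∈ Finset.range n, ((j:ℝ) - β))
          = (∏ j ∈ Finset.range n, (-1:ℝ)) * (∏ j ∈ Finset.range n, (β - (j:ℝ))) := by
        rw [← Finset.prod_mul_distrib]
        exact Finset.prod_congr rfl fun j _ => by ring
      rw [this, Finset.prod_const, Finset.card_range]; ring
    rw [this]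
    refine mul_nonneg (Finset.prod_nonneg fun j _ => ?_) (Real.rpow_nonneg hx.le _)
    have : (0:ℝ) ≤ j := Nat.cast_nonneg j
    linarith

lemma SCM.exp_neg : SCM 0 (fun x : ℝ => Real.exp (-x)) := by
  constructor
  · exact ((Real.contDiff_exp).comp contDiff_neg).contDiffOn
  · intro n x hx
    have h : iteratedDeriv n (fun x : ℝ => Real.exp (-x)) x
        = (-1:ℝ)^n * Real.exp (-x) := by
      have := iteratedDeriv_comp_neg n Real.exp x
      simp only [smul_eq_mul] at this
      rw [this, iteratedDeriv_eq_iterate, Real.iter_deriv_exp]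
    rw [h, add_zero, ← mul_assoc, ← mul_pow]
    simp [Real.exp_nonneg]

/-- coefficient functions in the one-dimensional Faà di Bruno formula for `g ∘ f`
where `f` has derivative `P`. -/
noncomputable def Qc (P : ℝ → ℝ) : ℕ → ℕ → ℝ → ℝ
  | 0, 0 => fun _ => 1
  | 0, _+1 => fun _ => 0
  | i+1, 0 => deriv (Qc P i 0)
  | i+1, m+1 => fun u => deriv (Qc P i (m+1)) u + Qc P i m u * P u

lemma Qc_eq_zero (P : ℝ → ℝ) : ∀ i m, i < m → Qc P i m = fun _ => 0 := by
  intro i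
  induction i with
  | zero =>
    intro m hm
    rcases m with _ | m
    · omega
    · rfl
  | succ i ih =>
    intro m hm
    rcases m with _ | m
    · omega
    · show (fun u => deriv (Qc P i (m+1)) u + Qc P i m u * P u) = fun _ => 0
      rw [ih (m+1) (by omega), ih m (by omega)]
      funext u; simp

lemma Qc_SCM {P : ℝ → ℝ} (hP : SCM 0 P) : ∀ i m, SCM (i - m) (Qc P i m) := by
  intro i
  induction i with
  | zero =>
    intro m
    rcases m with _ | m
    · simpa [Qc] using SCM.const (zero_le_one)
    · simpa [Qc] using SCM.zero_fun 0
  | succ i ih =>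
    intro m
    rcases m with _ | m
    · show SCM (i+1-0) (deriv (Qc P i 0))
      have := (ih 0).deriv
      simpa using this
    · rcases lt_trichotomy m i with hmi | hmi | hmi
      · -- m < i
        show SCM (i+1-(m+1)) (fun u => deriv (Qc P i (m+1)) u + Qc P i m u * P u)
        have h1 : SCM (i - (m+1) + 1) (deriv (Qc P i (m+1))) := (ih (m+1)).deriv
        have h2 : SCM ((i-m) + 0) (fun u => Qc P i m u * P u) := (ih m).mul hP
        have e1 : i - (m+1) + 1 = i + 1 - (m+1) := by omega
        have e2 : (i-m) + 0 = i + 1 - (m+1) := by omega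
        rw [e1] at h1; rw [e2] at h2
        exact h1.add h2
      · -- m = i
        subst hmi
        show SCM (m+1-(m+1)) (fun u => deriv (Qc P m (m+1)) u + Qc P m m u * P u)
        have hz : Qc P m (m+1) = fun _ => 0 := Qc_eq_zero P m (m+1) (by omega)
        have hd : deriv (Qc P m (m+1)) = fun _ => (0:ℝ) := by
          rw [hz]; funext u; simp
        have h2 : SCM ((m-m) + 0) (fun u => Qc P m m u * P u) := (ih m).mul hP
        have : (fun u => deriv (Qc P m (m+1)) u + Qc P m m u * P u)
            = fun u => Qc P m m u * P u := by
          rw [hd]; funext u; simp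
        rw [this]
        simpa using h2
      · -- i < m
        have hz : Qc P (i+1) (m+1) = fun _ => 0 := Qc_eq_zero P (i+1) (m+1) (by omega)
        rw [hz]
        exact SCM.zero_fun _

/-- derivative in `x` of `(x+y)^α * t₁` -/
noncomputable def Pc (α t₁ : ℝ) : ℝ → ℝ := fun u => α * u ^ (α - 1) * t₁

lemma alg_key (G D Q R : ℕ → ℝ) (p : ℝ) (i : ℕ)
    (hR0 : R 0 = D 0) (hRs : ∀ m, R (m+1) = D (m+1) + Q m * p) (hDtop : D (i+1) = 0) :
    ∑ m ∈ Finset.range (i+1), (G (m+1) * p * Q m + G m * D m)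
      = ∑ m ∈ Finset.range (i+2), G m * R m := by
  rw [Finset.sum_add_distrib]
  rw [Finset.sum_range_succ' (fun m => G m * D m) i]
  rw [Finset.sum_range_succ' (fun m => G m * R m) (i+1)]
  rw [hR0]
  have h1 : ∑ m ∈ Finset.range (i+1), G (m+1) * R (m+1)
      = ∑ m ∈ Finset.range (i+1), (G (m+1) * D (m+1) + G (m+1) * p * Q m) := by
    refine Finset.sum_congr rfl fun m _ => ?_
    rw [hRs m]; ring
  rw [h1, Finset.sum_add_distrib]
  have h2 : ∑ m ∈ Finset.range (i+1), G (m+1) * D (m+1)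
      = ∑ m ∈ Finset.range i, G (m+1) * D (m+1) := by
    rw [Finset.sum_range_succ, hDtop, mul_zero, add_zero]
  rw [h2]; ring

lemma inner_formula {α t₁ b : ℝ} {g : ℝ → ℝ} (hg : Sm g)
    (hα0 : 0 < α) (ht : 0 < t₁) (hb : 0 ≤ b)
    (hQS : ∀ i m, Sm (Qc (Pc α t₁) i m)) :
    ∀ (i : ℕ) (y : ℝ), 0 < y → ∀ x : ℝ, 0 < x →
      iteratedDeriv i (fun x' => g ((x'+y)^α * t₁ + y^α * b)) x
      = ∑ m ∈ Finset.range (i+1),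
          iteratedDeriv m g ((x+y)^α * t₁ + y^α * b) * Qc (Pc α t₁) i m (x+y) := by
  intro i
  induction i with
  | zero =>
    intro y hy x hx
    simp [Qc]
  | succ i ih =>
    intro y hy x hx
    have hxy : 0 < x + y := by linarith
    have hA : 0 < (x+y)^α * t₁ + y^α * b :=
      add_pos_of_pos_of_nonneg (mul_pos (Real.rpow_pos_of_pos hxy α) ht)
        (mul_nonneg (Real.rpow_nonneg hy.le α) hb)
    rw [iteratedDeriv_succ]
    have h1 : iteratedDeriv i (fun x' => g ((x'+y)^α * t₁ + y^α * b)) =ᶠ[𝓝 x]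
        fun x' => ∑ m ∈ Finset.range (i+1),
          iteratedDeriv m g ((x'+y)^α * t₁ + y^α * b) * Qc (Pc α t₁) i m (x'+y) := by
      filter_upwards [isOpen_Ioi.mem_nhds hx] with z hz using ih y hy z hz
    rw [h1.deriv_eq]
    have h0 : HasDerivAt (fun x' : ℝ => x' + y) 1 x := (hasDerivAt_id x).add_const y
    have hAd : HasDerivAt (fun x' : ℝ => (x'+y)^α * t₁ + y^α * b) (Pc α t₁ (x+y)) x := by
      have h1' : HasDerivAt (fun x' : ℝ => (x'+y)^α) (α * (x+y)^(α-1) * 1) x :=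
        by have := (Real.hasDerivAt_rpow_const (p := α) (x := x + y) (Or.inl hxy.ne')).comp x h0
           exact this
      have := (h1'.mul_const t₁).add_const (y^α * b)
      simpa [Pc, mul_one] using this
    have hterm : ∀ m ∈ Finset.range (i+1), HasDerivAt
        (fun x' => iteratedDeriv m g ((x'+y)^α * t₁ + y^α * b) * Qc (Pc α t₁) i m (x'+y))
        (iteratedDeriv (m+1) g ((x+y)^α * t₁ + y^α * b) * Pc α t₁ (x+y) * Qc (Pc α t₁) i m (x+y)
          + iteratedDeriv m g ((x+y)^α * t₁ + y^α * b) * deriv (Qc (Pc α t₁) i m) (x+y)) x := by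
      intro m _
      have hgm : HasDerivAt (iteratedDeriv m g)
          (iteratedDeriv (m+1) g ((x+y)^α * t₁ + y^α * b)) ((x+y)^α * t₁ + y^α * b) := by
        rw [iteratedDeriv_succ]
        exact ((hg.iteratedDeriv m).differentiableAt hA).hasDerivAt
      have hcomp : HasDerivAt (fun x' => iteratedDeriv m g ((x'+y)^α * t₁ + y^α * b))
          (iteratedDeriv (m+1) g ((x+y)^α * t₁ + y^α * b) * Pc α t₁ (x+y)) x := by
        simpa [Function.comp_def] using hgm.comp x hAd
      have hQ : HasDerivAt (fun x' => Qc (Pc α t₁) i m (x'+y))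
          (deriv (Qc (Pc α t₁) i m) (x+y)) x := by
        simpa [Function.comp_def] using (((hQS i m).differentiableAt hxy).hasDerivAt).comp x h0
      simpa using hcomp.fun_mul hQ
    rw [(HasDerivAt.fun_sum hterm).deriv]
    exact alg_key
      (fun m => iteratedDeriv m g ((x+y)^α * t₁ + y^α * b))
      (fun m => deriv (Qc (Pc α t₁) i m) (x+y))
      (fun m => Qc (Pc α t₁) i m (x+y))
      (fun m => Qc (Pc α t₁) (i+1) m (x+y))
      (Pc α t₁ (x+y)) i rfl (fun m => rfl)
      (by show deriv (Qc (Pc α t₁) i (i+1)) (x+y) = 0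
          rw [Qc_eq_zero (Pc α t₁) i (i+1) (by omega)]; simp)

theorem main_sign {α t₁ b : ℝ} {g : ℝ → ℝ} (hg : SCM 0 g)
    (hα0 : 0 < α) (hα1 : α < 1) (ht : 0 < t₁) (hb : 0 ≤ b)
    (i j : ℕ) (η₁ η₂ : ℝ) (h1 : 0 < η₁) (h2 : 0 < η₂) :
    0 ≤ (-1:ℝ)^(i+j) * iteratedDeriv j
      (fun y => iteratedDeriv i (fun x => g ((x+y)^α * t₁ + y^α * b)) η₁) η₂ := by
  have hβ : α - 1 ≤ 0 := by linarith
  have hP : SCM 0 (Pc α t₁) := by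
    have := (SCM.const_mul hα0.le (SCM.rpow hβ)).mul (SCM.const ht.le)
    unfold Pc; simpa using this
  have hQ := Qc_SCM hP
  have hQS : ∀ i m, Sm (Qc (Pc α t₁) i m) := fun i m => (hQ i m).1
  set f : ℝ → ℝ := fun y => (η₁+y)^α * t₁ + y^α * b with hf_def
  have hfpos : ∀ y, 0 < y → 0 < f y := by
    intro y hy
    exact add_pos_of_pos_of_nonneg
      (mul_pos (Real.rpow_pos_of_pos (by linarith) α) ht)
      (mul_nonneg (Real.rpow_nonneg hy.le α) hb)
  have hfS : Sm f := by
    refine Sm.of_contDiffAt fun y hy => ?_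
    have h1' : ContDiffAt ℝ ∞ (fun y : ℝ => (η₁+y)^α) y := by
      have hc : ContDiffAt ℝ ∞ (fun u : ℝ => u^α) (η₁+y) :=
        Real.contDiffAt_rpow_const_of_ne (by positivity)
      exact hc.comp y (contDiffAt_const.add contDiffAt_id)
    have h2' : ContDiffAt ℝ ∞ (fun y : ℝ => y^α) y :=
      Real.contDiffAt_rpow_const_of_ne hy.ne'
    exact (h1'.mul contDiffAt_const).add (h2'.mul contDiffAt_const)
  have hR : SCM 0 (fun y => α * (η₁+y)^(α-1) * t₁ + α * y^(α-1) * b) := by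
    have hsh : SCM 0 (fun y => Pc α t₁ (η₁+y)) := hP.shift h1.le
    have hsec : SCM 0 (fun y => α * y^(α-1) * b) := by
      have := (SCM.const_mul hα0.le (SCM.rpow hβ)).mul (SCM.const hb)
      simpa using this
    have := hsh.add hsec
    simpa [Pc] using this
  have hfd : ∀ n x, 0 < x → 0 ≤ (-1:ℝ)^n * iteratedDeriv n (_root_.deriv f) x := by
    intro n x hx
    have hEq : Set.EqOn (_root_.deriv f)
        (fun y => α * (η₁+y)^(α-1) * t₁ + α * y^(α-1) * b) (Set.Ioi 0) := by
      intro y hy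
      have hy' : (0:ℝ) < y := hy
      have hd1 : HasDerivAt (fun y : ℝ => (η₁+y)^α) (α * (η₁+y)^(α-1) * 1) y :=
        (Real.hasDerivAt_rpow_const (p := α) (Or.inl (by positivity))).comp y
          ((hasDerivAt_id y).const_add η₁)
      have hd2 : HasDerivAt (fun y : ℝ => y^α) (α * y^(α-1)) y :=
        Real.hasDerivAt_rpow_const (Or.inl hy'.ne')
      have := (hd1.mul_const t₁).fun_add (hd2.mul_const b)
      have h3 : HasDerivAt f (α * (η₁+y)^(α-1) * t₁ + α * y^(α-1) * b) y := by
        simpa [hf_def, mul_one] using this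
      exact h3.deriv
    rw [Set.EqOn.iteratedDeriv_of_isOpen hEq isOpen_Ioi n hx]
    simpa using hR.2 n x hx
  have hgm : ∀ m, SCM m (iteratedDeriv m g) := by
    intro m
    induction m with
    | zero => simpa [iteratedDeriv_zero] using hg
    | succ m ihm =>
      rw [iteratedDeriv_succ]
      simpa using ihm.deriv
  have hterms : ∀ m ∈ Finset.range (i+1),
      Sm (fun y => iteratedDeriv m g ((η₁+y)^α * t₁ + y^α * b) * Qc (Pc α t₁) i m (η₁+y)) := by
    intro m _
    refine Sm.mul ?_ ?_
    · exact Sm.comp (hg.1.iteratedDeriv m) hfS hfpos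
    · refine Sm.of_contDiffAt fun y hy => ?_
      exact ((hQS i m).contDiffAt (by positivity)).comp y (contDiffAt_const.add contDiffAt_id)
  have hev : (fun y => iteratedDeriv i (fun x => g ((x+y)^α * t₁ + y^α * b)) η₁) =ᶠ[𝓝 η₂]
      (fun y => ∑ m ∈ Finset.range (i+1),
        iteratedDeriv m g ((η₁+y)^α * t₁ + y^α * b) * Qc (Pc α t₁) i m (η₁+y)) := by
    filter_upwards [isOpen_Ioi.mem_nhds h2] with y hy
    exact inner_formula hg.1 hα0 ht hb hQS i y hy η₁ h1
  rw [Filter.EventuallyEq.iteratedDeriv_eq j hev]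
  rw [iteratedDeriv_sum_pos _ _ hterms j h2, Finset.mul_sum]
  refine Finset.sum_nonneg fun m hm => ?_
  have hm' : m ≤ i := by have := Finset.mem_range.mp hm; omega
  have hSmF : Sm (fun y => iteratedDeriv m g ((η₁+y)^α * t₁ + y^α * b)) :=
    Sm.comp (hg.1.iteratedDeriv m) hfS hfpos
  have hSmS : Sm (fun y => Qc (Pc α t₁) i m (η₁+y)) :=
    Sm.of_contDiffAt fun y hy =>
      ((hQS i m).contDiffAt (by positivity)).comp y (contDiffAt_const.add contDiffAt_id)
  rw [iteratedDeriv_mul_pos hSmF hSmS j η₂ h2, Finset.mul_sum]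
  refine Finset.sum_nonneg fun l hl => ?_
  have hl' : l ≤ j := by have := Finset.mem_range.mp hl; omega
  have hFs : 0 ≤ (-1:ℝ)^(l+m) * iteratedDeriv l
      (fun y => iteratedDeriv m g ((η₁+y)^α * t₁ + y^α * b)) η₂ :=
    SCM.compBernstein hfS hfpos hfd l m (iteratedDeriv m g) (hgm m) η₂ h2
  have hSs : 0 ≤ (-1:ℝ)^((j-l)+(i-m)) * iteratedDeriv (j-l)
      (fun y => Qc (Pc α t₁) i m (η₁+y)) η₂ :=
    ((hQ i m).shift h1.le).2 (j-l) η₂ h2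
  have h3 := sgn_mul hFs hSs
  have he : (l+m) + ((j-l)+(i-m)) = i + j := by omega
  rw [he] at h3
  have : (-1:ℝ)^(i+j) * ((j.choose l : ℝ) *
        (iteratedDeriv l (fun y => iteratedDeriv m g ((η₁+y)^α * t₁ + y^α * b)) η₂ *
          iteratedDeriv (j-l) (fun y => Qc (Pc α t₁) i m (η₁+y)) η₂))
      = (j.choose l : ℝ) * ((-1:ℝ)^(i+j) *
        (iteratedDeriv l (fun y => iteratedDeriv m g ((η₁+y)^α * t₁ + y^α * b)) η₂ *
          iteratedDeriv (j-l) (fun y => Qc (Pc α t₁) i m (η₁+y)) η₂)) := by ring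
  rw [this]
  exact mul_nonneg (by positivity) h3


end CMAux

/-- The upper incomplete gamma function `Γ(ρ, x) = ∫_x^∞ e^{-w} w^{ρ-1} dw`. -/
noncomputable def uGamma (ρ x : ℝ) : ℝ := ∫ w in Set.Ioi x, Real.exp (-w) * w ^ (ρ - 1)

noncomputable section CMAux2

variable {ρ : ℝ}

lemma phi_SCM (hρ : ρ - 1 ≤ 0) : SCM 0 (fun w : ℝ => Real.exp (-w) * w ^ (ρ-1)) := by
  have := SCM.exp_neg.mul (SCM.rpow hρ)
  simpa using this

lemma phi_contOn : ContinuousOn (fun w : ℝ => Real.exp (-w) * w ^ (ρ-1)) (Set.Ioi 0) := by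
  refine ContinuousOn.mul ((Real.continuous_exp.comp continuous_neg).continuousOn) ?_
  intro x hx
  exact (Real.continuousAt_rpow_const x (ρ-1) (Or.inl (ne_of_gt hx))).continuousWithinAt

lemma uGamma_eq (hρ0 : 0 < ρ) {x : ℝ} (hx : 0 < x) :
    uGamma ρ x = (∫ w in Set.Ioi (0:ℝ), Real.exp (-w) * w ^ (ρ-1))
      - ∫ w in (0:ℝ)..x, Real.exp (-w) * w ^ (ρ-1) := by
  have hint : IntegrableOn (fun w : ℝ => Real.exp (-w) * w ^ (ρ-1)) (Set.Ioi 0) :=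
    Real.GammaIntegral_convergent hρ0
  have hsplit : (Set.Ioc (0:ℝ) x) ∪ (Set.Ioi x) = Set.Ioi (0:ℝ) :=
    Set.Ioc_union_Ioi_eq_Ioi hx.le
  have hdisj : Disjoint (Set.Ioc (0:ℝ) x) (Set.Ioi x) := by
    rw [Set.disjoint_left]
    intro w hw hw'
    exact absurd hw.2 (not_le.mpr hw')
  have := MeasureTheory.setIntegral_union hdisj measurableSet_Ioi
    (hint.mono_set (by rw [← hsplit]; exact Set.subset_union_left))
    (hint.mono_set (by rw [← hsplit]; exact Set.subset_union_right))
    (f := fun w : ℝ => Real.exp (-w) * w ^ (ρ-1)) (μ := volume)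
  rw [hsplit] at this
  rw [intervalIntegral.integral_of_le hx.le, uGamma]
  rw [this]; ring

lemma uGamma_hasDeriv (hρ0 : 0 < ρ) {x : ℝ} (hx : 0 < x) :
    HasDerivAt (uGamma ρ) (-(Real.exp (-x) * x ^ (ρ-1))) x := by
  have hint : IntegrableOn (fun w : ℝ => Real.exp (-w) * w ^ (ρ-1)) (Set.Ioi 0) :=
    Real.GammaIntegral_convergent hρ0
  have hii : IntervalIntegrable (fun w : ℝ => Real.exp (-w) * w ^ (ρ-1)) volume 0 x := by
    rw [intervalIntegrable_iff_integrableOn_Ioc_of_le hx.le]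
    exact hint.mono_set Set.Ioc_subset_Ioi_self
  have hms := ContinuousOn.stronglyMeasurableAtFilter (μ := volume) isOpen_Ioi (phi_contOn (ρ := ρ)) x hx
  have hca : ContinuousAt (fun w : ℝ => Real.exp (-w) * w ^ (ρ-1)) x :=
    (phi_contOn.continuousAt (isOpen_Ioi.mem_nhds hx))
  have hF := intervalIntegral.integral_hasDerivAt_right hii hms hca
  have hev : uGamma ρ =ᶠ[𝓝 x] fun u => (∫ w in Set.Ioi (0:ℝ), Real.exp (-w) * w ^ (ρ-1))
      - ∫ w in (0:ℝ)..u, Real.exp (-w) * w ^ (ρ-1) := by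
    filter_upwards [isOpen_Ioi.mem_nhds hx] with u hu
    exact uGamma_eq hρ0 hu
  have : HasDerivAt (fun u => (∫ w in Set.Ioi (0:ℝ), Real.exp (-w) * w ^ (ρ-1))
      - ∫ w in (0:ℝ)..u, Real.exp (-w) * w ^ (ρ-1)) (-(Real.exp (-x) * x ^ (ρ-1))) x := by
    simpa using (hasDerivAt_const x _).fun_sub hF
  exact this.congr_of_eventuallyEq hev

lemma uGamma_SCM {ρ : ℝ} (hρ0 : 0 < ρ) (hρ1 : ρ ≤ 1) : SCM 0 (uGamma ρ) := by
  have hρ' : ρ - 1 ≤ 0 := by linarith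
  have hEq : Set.EqOn (deriv (uGamma ρ))
      (fun x => -(Real.exp (-x) * x ^ (ρ-1))) (Set.Ioi 0) :=
    fun x hx => (uGamma_hasDeriv hρ0 hx).deriv
  have hSm : Sm (uGamma ρ) := by
    rw [Sm, contDiffOn_infty_iff_deriv_of_isOpen isOpen_Ioi]
    constructor
    · exact fun x hx =>
        ((uGamma_hasDeriv hρ0 hx).differentiableAt).differentiableWithinAt
    · exact ContDiffOn.congr ((phi_SCM hρ').1.neg) hEq
  refine ⟨hSm, fun n x hx => ?_⟩
  rcases n with _ | n
  · have hnn : 0 ≤ ∫ w in Set.Ioi x, Real.exp (-w) * w ^ (ρ-1) := by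
      apply MeasureTheory.setIntegral_nonneg measurableSet_Ioi
      intro w hw
      exact mul_nonneg (Real.exp_nonneg _) (Real.rpow_nonneg (le_of_lt (lt_trans hx hw)) _)
    simpa [uGamma] using hnn
  · rw [iteratedDeriv_succ', Set.EqOn.iteratedDeriv_of_isOpen hEq isOpen_Ioi n hx,
      iteratedDeriv_fun_neg]
    have hv := (phi_SCM hρ').2 n x hx
    have e : (-1:ℝ)^(n+1+0) * -(iteratedDeriv n (fun w : ℝ => Real.exp (-w) * w ^ (ρ-1)) x)
        = (-1:ℝ)^(n+0) * iteratedDeriv n (fun w : ℝ => Real.exp (-w) * w ^ (ρ-1)) x := by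
      rw [add_zero, add_zero, pow_succ]; ring
    rw [e]; exact hv

lemma g_SCM {ρ : ℝ} (hρ0 : 0 < ρ) (hρ1 : ρ ≤ 1) :
    SCM 0 (fun u => uGamma ρ u / Real.Gamma ρ) := by
  have heq : (fun u => uGamma ρ u / Real.Gamma ρ)
      = fun u => (Real.Gamma ρ)⁻¹ * uGamma ρ u := funext fun u => div_eq_inv_mul _ _
  rw [heq]
  exact SCM.const_mul (inv_nonneg.mpr (Real.Gamma_pos_of_pos hρ0).le) (uGamma_SCM hρ0 hρ1)


end CMAux2

theorem bivariate_laplace_transform_completely_monotone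
    (α ρ t₁ t₂ : ℝ) (hα : α ∈ Set.Ioo (0 : ℝ) 1) (hρ : ρ ∈ Set.Ioc (0 : ℝ) 1)
    (ht₁ : 0 < t₁) (ht₁₂ : t₁ < t₂) :
    ∀ (k₁ k₂ : ℕ) (η₁ η₂ : ℝ), 0 < η₁ → 0 < η₂ →
      0 ≤ (-1 : ℝ) ^ (k₁ + k₂) *
        iteratedDeriv k₂
          (fun y => iteratedDeriv k₁
            (fun x => uGamma ρ ((x + y) ^ α * t₁ + y ^ α * (t₂ - t₁)) / Real.Gamma ρ) η₁) η₂ := by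
  intro k₁ k₂ η₁ η₂ h1 h2
  have hb : (0:ℝ) ≤ t₂ - t₁ := by linarith [ht₁₂]
  exact main_sign (g_SCM hρ.1 hρ.2) hα.1 hα.2 ht₁ hb k₁ k₂ η₁ η₂ h1 h2
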